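/- (Differentiation under the n,q-integral sign) Let s ∈ I and set [s]_{n,q} = {q^{[k]_n}·s^{n^k} : k ∈ ℕ}. Let ε̄ > 0, ε₀ ∈ (−ε̄, ε̄), and g : ℝ × (−ε̄, ε̄) → ℝ. Assume: (i) g(t,·) is differentiable at ε₀ uniformly in t ∈ [s]_{n,q}, i.e., there is a function ∂₂g(·, ε₀) on [s]_{n,q} such that for every ε′ > 0 there exists δ > 0 with |(g(t,ε) − g(t,ε₀))/(ε − ε₀) − ∂₂g(t,ε₀)| < ε′ for all t ∈ [s]_{n,q} and all ε with 0 < |ε − ε₀| < δ; (ii) G(ε) := ∫_0^s g(t,ε) d_{n,q}t exists (the defining series converges) for all ε in a neighborhood of ε₀; (iii) ∫_0^s ∂₂g(t,ε₀) d_{n,q}t exists. Then G is differentiable at ε₀ and G′(ε₀) = ∫_0^s ∂₂g(t,ε₀) d_{n,q}t. -/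

import Mathlib

open Filter
open scoped Classical

noncomputable section

/-- `[k]_n = ∑_{i=0}^{k-1} n^i` (so `[0]_n = 0`). -/
def nbr (n k : ℕ) : ℕ := ∑ i ∈ Finset.range k, n ^ i

/-- `h(t) = q·t^n`. -/
def hfun (q : ℝ) (n : ℕ) (t : ℝ) : ℝ := q * t ^ n

/-- `θ = q^(1/(1-n))` (meaningful for `n ≥ 3`). -/
def theta (q : ℝ) (n : ℕ) : ℝ := q ^ ((1 : ℝ) / (1 - (n : ℝ)))

/-- `S = {0}` if `n = 1`, and `S = {-θ, 0, θ}` if `n ≥ 3`. -/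
def Sset (q : ℝ) (n : ℕ) : Set ℝ :=
  if n = 1 then {0} else {-theta q n, 0, theta q n}

/-- `I = (-θ, θ)` (all of `ℝ` when `n = 1`). -/
def Iset (q : ℝ) (n : ℕ) : Set ℝ :=
  if n = 1 then Set.univ else Set.Ioo (-theta q n) (theta q n)

/-- The `n,q`-power difference operator `D_{n,q}`. -/
def Dnq (q : ℝ) (n : ℕ) (f : ℝ → ℝ) (t : ℝ) : ℝ :=
  if t ∈ Sset q n then deriv f t
  else (f (q * t ^ n) - f t) / (q * t ^ n - t)

/-- The `k`-th summand of the series defining the `n,q`-integral `∫_0^x f(t) d_{n,q}t`. -/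
def nqSeq (q : ℝ) (n : ℕ) (f : ℝ → ℝ) (x : ℝ) (k : ℕ) : ℝ :=
  q ^ nbr n k * x ^ n ^ k * (q ^ n ^ k * x ^ (n ^ k * (n - 1)) - 1) *
    f (q ^ nbr n k * x ^ n ^ k)

/-- `∫_0^x f(t) d_{n,q}t`. -/
def nqInt0 (q : ℝ) (n : ℕ) (f : ℝ → ℝ) (x : ℝ) : ℝ := -∑' k : ℕ, nqSeq q n f x k

/-- `∫_a^b f(t) d_{n,q}t = ∫_0^b f(t) d_{n,q}t − ∫_0^a f(t) d_{n,q}t`. -/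
def nqInt (q : ℝ) (n : ℕ) (f : ℝ → ℝ) (a b : ℝ) : ℝ :=
  nqInt0 q n f b - nqInt0 q n f a

/-- The orbit `[s]_{n,q} = {q^{[k]_n}·s^{n^k} : k ∈ ℕ}`. -/
def nqOrbit (q : ℝ) (n : ℕ) (s : ℝ) : Set ℝ :=
  Set.range fun k : ℕ => q ^ nbr n k * s ^ n ^ k

/-- The `n,q`-interval `[a,b]_{n,q}`. -/
def nqInterval (q : ℝ) (n : ℕ) (a b : ℝ) : Set ℝ :=
  nqOrbit q n a ∪ nqOrbit q n b ∪ {0}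

lemma nbr_mul_aux (m k : ℕ) : m * nbr (m + 1) k + 1 = (m + 1) ^ k := by
  induction k with
  | zero => simp [nbr]
  | succ k ih =>
    have : nbr (m + 1) (k + 1) = nbr (m + 1) k + (m + 1) ^ k := by
      simp [nbr, Finset.sum_range_succ]
    rw [this, pow_succ]
    calc m * (nbr (m + 1) k + (m + 1) ^ k) + 1
        = (m * nbr (m + 1) k + 1) + m * (m + 1) ^ k := by ring
      _ = (m + 1) ^ k + m * (m + 1) ^ k := by rw [ih]
      _ = (m + 1) ^ k * (m + 1) := by ring

/-- absolute summability of the coefficients -/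
lemma abs_coef_summable (q : ℝ) (hq0 : 0 < q) (hq1 : q < 1) (n : ℕ) (hn : Odd n)
    (s : ℝ) (hs : s ∈ Iset q n) :
    Summable fun k : ℕ =>
      |q ^ nbr n k * s ^ n ^ k * (q ^ n ^ k * s ^ (n ^ k * (n - 1)) - 1)| := by
  by_cases h1 : n = 1
  · subst h1
    have hnbr : ∀ k, nbr 1 k = k := by intro k; simp [nbr]
    have heq : ∀ k : ℕ,
        |q ^ nbr 1 k * s ^ 1 ^ k * (q ^ 1 ^ k * s ^ (1 ^ k * (1 - 1)) - 1)|
          = |s * (q - 1)| * q ^ k := by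
      intro k
      have h : q ^ nbr 1 k * s ^ 1 ^ k * (q ^ 1 ^ k * s ^ (1 ^ k * (1 - 1)) - 1)
          = s * (q - 1) * q ^ k := by
        simp only [hnbr, one_pow, pow_one, Nat.sub_self, pow_zero, mul_one]
        ring
      rw [h, abs_mul, abs_of_nonneg (pow_nonneg hq0.le k)]
    simp only [heq]
    exact (summable_geometric_of_lt_one hq0.le hq1).mul_left _
  · -- n ≥ 3
    have hn1 : 1 ≤ n := hn.pos
    have hn2 : 2 ≤ n := by omega
    have hne : (1 : ℝ) - (n : ℝ) ≠ 0 := by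
      have : (2 : ℝ) ≤ (n : ℝ) := by exact_mod_cast hn2
      linarith
    have hnn : (0 : ℝ) < (n : ℝ) - 1 := by
      have : (2 : ℝ) ≤ (n : ℝ) := by exact_mod_cast hn2
      linarith
    have hθ0 : 0 < theta q n := Real.rpow_pos_of_pos hq0 _
    have hsθ : |s| < theta q n := by
      rw [Iset, if_neg h1] at hs
      exact abs_lt.mpr ⟨hs.1, hs.2⟩
    set v : ℝ := q ^ ((1 : ℝ) / ((n : ℝ) - 1)) with hv
    have hv0 : 0 < v := Real.rpow_pos_of_pos hq0 _
    have hv1 : v < 1 := Real.rpow_lt_one hq0.le hq1 (by positivity)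
    -- v ^ (n-1) = q
    have hvq : v ^ (n - 1) = q := by
      rw [hv, ← Real.rpow_natCast (q ^ ((1:ℝ)/((n:ℝ)-1))) (n-1), ← Real.rpow_mul hq0.le]
      have : ((n - 1 : ℕ) : ℝ) = (n : ℝ) - 1 := by
        rw [Nat.cast_sub hn1]; norm_num
      rw [this, one_div, inv_mul_cancel₀ (ne_of_gt hnn), Real.rpow_one]
    -- v * theta = 1
    have hvθ : v * theta q n = 1 := by
      rw [hv, theta, ← Real.rpow_add hq0]
      have : (1 : ℝ) / ((n : ℝ) - 1) + 1 / (1 - (n : ℝ)) = 0 := by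
        field_simp
        ring
      rw [this, Real.rpow_zero]
    -- q * theta ^ (n-1) = 1
    have hqθ : q * theta q n ^ (n - 1) = 1 := by
      rw [theta, ← Real.rpow_natCast (q ^ ((1:ℝ)/(1-(n:ℝ)))) (n-1), ← Real.rpow_mul hq0.le]
      have : ((n - 1 : ℕ) : ℝ) = (n : ℝ) - 1 := by
        rw [Nat.cast_sub hn1]; norm_num
      rw [this]
      have h2 : (1 : ℝ) / (1 - (n : ℝ)) * ((n : ℝ) - 1) = -1 := by
        field_simp
        ring
      rw [h2, Real.rpow_neg_one, mul_inv_cancel₀ (ne_of_gt hq0)]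
    set w : ℝ := v * |s| with hw
    have hw0 : 0 ≤ w := mul_nonneg hv0.le (abs_nonneg s)
    have hw1 : w < 1 := by
      calc w = v * |s| := rfl
        _ < v * theta q n := by exact mul_lt_mul_of_pos_left hsθ hv0
        _ = 1 := hvθ
    -- key termwise bound
    have hbound : ∀ k : ℕ,
        |q ^ nbr n k * s ^ n ^ k * (q ^ n ^ k * s ^ (n ^ k * (n - 1)) - 1)|
          ≤ v⁻¹ * w ^ k := by
      intro k
      have hk1 : 1 ≤ n ^ k := Nat.one_le_pow _ _ (by omega)
      -- first factor: q ^ nbr n k * |s| ^ n^k = v⁻¹ * w ^ (n^k)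
      have hfe : q ^ nbr n k * |s| ^ n ^ k = v⁻¹ * w ^ n ^ k := by
        have hqv : q ^ nbr n k = v ^ ((n - 1) * nbr n k) := by
          rw [pow_mul, hvq]
        have hmul : (n - 1) * nbr n k + 1 = n ^ k := by
          have := nbr_mul_aux (n - 1) k
          have h' : n - 1 + 1 = n := by omega
          rwa [h'] at this
        have : v * (q ^ nbr n k) = v ^ n ^ k := by
          rw [hqv, ← pow_succ', hmul]
        field_simp [hw, mul_pow]
        calc q ^ nbr n k * |s| ^ n ^ k * v = (v * q ^ nbr n k) * |s| ^ n ^ k := by ring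
          _ = v ^ n ^ k * |s| ^ n ^ k := by rw [this]
          _ = w ^ n ^ k := by rw [hw, mul_pow]
      -- second factor bounded by 1
      have heven : Even (n ^ k * (n - 1)) := by
        have : Even (n - 1) := Nat.Odd.sub_odd hn odd_one
        exact this.mul_left _
      have hmid : q ^ n ^ k * s ^ (n ^ k * (n - 1)) = (q * |s| ^ (n - 1)) ^ n ^ k := by
        rw [← heven.pow_abs, mul_pow, ← pow_mul, mul_comm (n - 1) (n ^ k)]
      have hb0 : 0 ≤ q * |s| ^ (n - 1) := by positivity
      have hb1 : q * |s| ^ (n - 1) ≤ 1 := by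
        calc q * |s| ^ (n - 1) ≤ q * theta q n ^ (n - 1) := by
              apply mul_le_mul_of_nonneg_left _ hq0.le
              exact pow_le_pow_left₀ (abs_nonneg s) hsθ.le _
          _ = 1 := hqθ
      have hX0 : 0 ≤ (q * |s| ^ (n - 1)) ^ n ^ k := pow_nonneg hb0 _
      have hX1 : (q * |s| ^ (n - 1)) ^ n ^ k ≤ 1 := pow_le_one₀ hb0 hb1
      have hfac : |q ^ n ^ k * s ^ (n ^ k * (n - 1)) - 1| ≤ 1 := by
        rw [hmid, abs_le]; constructor <;> linarith
      calc |q ^ nbr n k * s ^ n ^ k * (q ^ n ^ k * s ^ (n ^ k * (n - 1)) - 1)|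
          = q ^ nbr n k * |s| ^ n ^ k * |q ^ n ^ k * s ^ (n ^ k * (n - 1)) - 1| := by
            rw [abs_mul, abs_mul, abs_pow, abs_pow, abs_of_pos hq0]
        _ ≤ q ^ nbr n k * |s| ^ n ^ k * 1 := by
            apply mul_le_mul_of_nonneg_left hfac
            positivity
        _ = v⁻¹ * w ^ n ^ k := by rw [mul_one, hfe]
        _ ≤ v⁻¹ * w ^ k := by
            apply mul_le_mul_of_nonneg_left _ (inv_nonneg.mpr hv0.le)
            exact pow_le_pow_of_le_one hw0 hw1.le (le_of_lt (Nat.lt_pow_self (by omega : 1 < n) : k < n ^ k))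
    exact Summable.of_nonneg_of_le (fun k => abs_nonneg _) hbound
      ((summable_geometric_of_lt_one hw0 hw1).mul_left _)

theorem stmt16 (q : ℝ) (hq0 : 0 < q) (hq1 : q < 1) (n : ℕ) (hn : Odd n)
    (s : ℝ) (hs : s ∈ Iset q n)
    (ebar e0 : ℝ) (hebar : 0 < ebar) (he0 : e0 ∈ Set.Ioo (-ebar) ebar)
    (g : ℝ → ℝ → ℝ) (dg : ℝ → ℝ)
    (hunif : ∀ ε' > (0 : ℝ), ∃ δ > (0 : ℝ), ∀ t ∈ nqOrbit q n s,
      ∀ ε ∈ Set.Ioo (-ebar) ebar, 0 < |ε - e0| → |ε - e0| < δ →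
        |(g t ε - g t e0) / (ε - e0) - dg t| < ε')
    (hG : ∀ᶠ ε in nhds e0, Summable (nqSeq q n (fun t => g t ε) s))
    (hdg : Summable (nqSeq q n dg s)) :
    HasDerivAt (fun ε => nqInt0 q n (fun t => g t ε) s) (nqInt0 q n dg s) e0 := by
  classical
  set x : ℕ → ℝ := fun k => q ^ nbr n k * s ^ n ^ k with hxdef
  set c : ℕ → ℝ := fun k =>
    q ^ nbr n k * s ^ n ^ k * (q ^ n ^ k * s ^ (n ^ k * (n - 1)) - 1) with hcdef
  have hseq : ∀ f : ℝ → ℝ, ∀ k, nqSeq q n f s k = c k * f (x k) := fun f k => rfl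
  have hcsum : Summable fun k => |c k| := abs_coef_summable q hq0 hq1 n hn s hs
  have hSe0 : Summable (nqSeq q n (fun t => g t e0) s) := hG.self_of_nhds
  rw [hasDerivAt_iff_tendsto_slope, Metric.tendsto_nhds]
  intro ε' hε'
  set C : ℝ := ∑' k, |c k| with hCdef
  have hC0 : 0 ≤ C := tsum_nonneg fun k => abs_nonneg _
  set ε'' : ℝ := ε' / (2 * (C + 1)) with hε''def
  have hε''0 : 0 < ε'' := by positivity
  obtain ⟨δ, hδ0, hδ⟩ := hunif ε'' hε''0
  have h1 : ∀ᶠ ε in nhdsWithin e0 {e0}ᶜ, ε ∈ Set.Ioo (-ebar) ebar :=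
    eventually_nhdsWithin_of_eventually_nhds (isOpen_Ioo.eventually_mem he0)
  have h2 : ∀ᶠ ε in nhdsWithin e0 {e0}ᶜ, Summable (nqSeq q n (fun t => g t ε) s) :=
    eventually_nhdsWithin_of_eventually_nhds hG
  have h3 : ∀ᶠ ε in nhdsWithin e0 {e0}ᶜ, |ε - e0| < δ := by
    apply eventually_nhdsWithin_of_eventually_nhds
    filter_upwards [Metric.ball_mem_nhds e0 hδ0] with ε hε
    simpa [Real.dist_eq] using hε
  filter_upwards [h1, h2, h3, self_mem_nhdsWithin] with ε hεIoo hSε hεδ hεne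
  have hne : ε ≠ e0 := by simpa using hεne
  have hsub : ε - e0 ≠ 0 := sub_ne_zero.mpr hne
  have habs : 0 < |ε - e0| := abs_pos.mpr hsub
  -- termwise estimate
  have hterm : ∀ k : ℕ,
      |c k * ((g (x k) ε - g (x k) e0) / (ε - e0) - dg (x k))| ≤ |c k| * ε'' := by
    intro k
    rw [abs_mul]
    apply mul_le_mul_of_nonneg_left _ (abs_nonneg _)
    exact le_of_lt (hδ (x k) ⟨k, rfl⟩ ε hεIoo habs hεδ)
  have hdsum : Summable fun k =>
      |c k * ((g (x k) ε - g (x k) e0) / (ε - e0) - dg (x k))| :=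
    Summable.of_nonneg_of_le (fun k => abs_nonneg _) hterm (hcsum.mul_right _)
  have hdsum' : Summable fun k =>
      c k * ((g (x k) ε - g (x k) e0) / (ε - e0) - dg (x k)) := hdsum.of_abs
  -- identify the slope minus the limit
  have hkey : slope (fun ε => nqInt0 q n (fun t => g t ε) s) e0 ε - nqInt0 q n dg s
      = -∑' k, c k * ((g (x k) ε - g (x k) e0) / (ε - e0) - dg (x k)) := by
    rw [slope_def_field]
    have e1 : nqInt0 q n (fun t => g t ε) s = -∑' k, c k * g (x k) ε := rfl
    have e2 : nqInt0 q n (fun t => g t e0) s = -∑' k, c k * g (x k) e0 := rfl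
    have e3 : nqInt0 q n dg s = -∑' k, c k * dg (x k) := rfl
    rw [e1, e2, e3]
    have hSε' : Summable fun k => c k * g (x k) ε := by
      exact hSε
    have hSe0' : Summable fun k => c k * g (x k) e0 := by
      exact hSe0
    have hdg' : Summable fun k => c k * dg (x k) := by
      exact hdg
    have hq1' : Summable fun k => (c k * g (x k) ε - c k * g (x k) e0) / (ε - e0) :=
      (hSε'.sub hSe0').div_const _
    calc (-∑' k, c k * g (x k) ε - -∑' k, c k * g (x k) e0) / (ε - e0)
        - -∑' k, c k * dg (x k)
        = -((∑' k, c k * g (x k) ε - ∑' k, c k * g (x k) e0) / (ε - e0)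
            - ∑' k, c k * dg (x k)) := by ring
      _ = -((∑' k, (c k * g (x k) ε - c k * g (x k) e0)) / (ε - e0)
            - ∑' k, c k * dg (x k)) := by rw [Summable.tsum_sub hSε' hSe0']
      _ = -(∑' k, (c k * g (x k) ε - c k * g (x k) e0) / (ε - e0)
            - ∑' k, c k * dg (x k)) := by rw [tsum_div_const]
      _ = -∑' k, ((c k * g (x k) ε - c k * g (x k) e0) / (ε - e0) - c k * dg (x k)) := by
            rw [Summable.tsum_sub hq1' hdg']
      _ = -∑' k, c k * ((g (x k) ε - g (x k) e0) / (ε - e0) - dg (x k)) := by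
            congr 1
            apply tsum_congr
            intro k
            field_simp
  rw [Real.dist_eq, hkey, abs_neg]
  calc |∑' k, c k * ((g (x k) ε - g (x k) e0) / (ε - e0) - dg (x k))|
      ≤ ∑' k, |c k * ((g (x k) ε - g (x k) e0) / (ε - e0) - dg (x k))| := by
        simpa only [Real.norm_eq_abs] using norm_tsum_le_tsum_norm (f := fun k =>
          c k * ((g (x k) ε - g (x k) e0) / (ε - e0) - dg (x k)))
          (by simp only [Real.norm_eq_abs]; exact hdsum)
    _ ≤ ∑' k, |c k| * ε'' := Summable.tsum_le_tsum hterm hdsum (hcsum.mul_right _)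
    _ = C * ε'' := by rw [tsum_mul_right]
    _ < ε' := by
        rw [hε''def]
        rw [div_eq_mul_inv]
        have : C * (ε' * (2 * (C + 1))⁻¹) < ε' := by
          rw [mul_comm, mul_assoc]
          have h2 : (2 * (C + 1))⁻¹ * C < 1 := by
            rw [inv_mul_lt_iff₀ (by positivity)]
            linarith
          calc ε' * ((2 * (C + 1))⁻¹ * C) < ε' * 1 := by
                exact mul_lt_mul_of_pos_left h2 hε'
            _ = ε' := mul_one ε'
        linarith [this]
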